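/- Let G be a 2-connected graph on n ≥ 3 vertices with minimum degree at least n/2. Then G has a Hamiltonian cycle. -/

import Mathlib

open SimpleGraph

/-- `P'` is aligned with `P` (both starting at `x`): shared vertices appear in the
same relative order. -/
def Aligned {V : Type*} [DecidableEq V] {G : SimpleGraph V} {x a b : V}
    (P : G.Walk x a) (P' : G.Walk x b) : Prop :=
  ∀ u v : V, u ∈ P.support → v ∈ P.support → u ∈ P'.support → v ∈ P'.support →
    P.support.idxOf u < P.support.idxOf v →
    P'.support.idxOf u < P'.support.idxOf v

/-- Two paths with common origin `x` are internally disjoint: every common vertex is a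
common endpoint. -/
def IntDisjoint {V : Type*} {G : SimpleGraph V} {x a b : V}
    (P : G.Walk x a) (Q : G.Walk x b) : Prop :=
  ∀ v : V, v ∈ P.support → v ∈ Q.support → (v = x ∨ v = a) ∧ (v = x ∨ v = b)

/-- 2-connected: at least 3 vertices, connected, and no cut vertex. -/
def TwoConnected {V : Type*} [Fintype V] (G : SimpleGraph V) : Prop :=
  3 ≤ Fintype.card V ∧ G.Connected ∧
    ∀ v : V, ((⊤ : G.Subgraph).deleteVerts {v}).coe.Connected

/-- A lollipop: a cycle `C` and a path `P` whose vertex sets meet exactly in the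
vertex `a`, an endpoint of `P` lying on `C`. -/
def IsLollipop {V : Type*} {G : SimpleGraph V} {v a w : V}
    (C : G.Walk v v) (P : G.Walk a w) : Prop :=
  C.IsCycle ∧ P.IsPath ∧ a ∈ C.support ∧ ∀ u ∈ C.support, u ∈ P.support → u = a

section DiracAux

open Walk

variable {V : Type*} {G : SimpleGraph V}

lemma dirac_support_getElem' {u v : V} (p : G.Walk u v) (i : ℕ) (h : i < p.support.length) :
    p.support[i] = p.getVert i := by
  induction p generalizing i with
  | nil => simp_all [Walk.getVert]
  | cons hadj q ih =>
    cases i with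
    | zero => simp
    | succ n =>
      simp only [Walk.support_cons, List.getElem_cons_succ, Walk.getVert_cons_succ]
      exact ih n (by simpa [Walk.length_support] using h)

lemma dirac_getVert_injOn' {u v : V} {p : G.Walk u v} (hp : p.IsPath) :
    ∀ i, i ≤ p.length → ∀ j, j ≤ p.length → p.getVert i = p.getVert j → i = j := by
  intro i hi j hj hij
  have hl : p.support.length = p.length + 1 := p.length_support
  have h1 : p.support[i]'(by omega) = p.getVert i := dirac_support_getElem' p i (by omega)
  have h2 : p.support[j]'(by omega) = p.getVert j := dirac_support_getElem' p j (by omega)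
  exact (List.Nodup.getElem_inj_iff hp.support_nodup).mp (by rw [h1, h2, hij])

lemma dirac_getVert_mem_support' {u v : V} (p : G.Walk u v) (i : ℕ) (hi : i ≤ p.length) :
    p.getVert i ∈ p.support :=
  Walk.mem_support_iff_exists_getVert.mpr ⟨i, rfl, hi⟩

variable [DecidableEq V]

lemma dirac_length_takeUntil_getVert {u v : V} {p : G.Walk u v} (hp : p.IsPath) {i : ℕ}
    (hi : i ≤ p.length) (h : p.getVert i ∈ p.support) :
    (p.takeUntil (p.getVert i) h).length = i := by
  set q1 := p.takeUntil (p.getVert i) h with hq1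
  set q2 := p.dropUntil (p.getVert i) h with hq2
  have hspec : q1.append q2 = p := p.take_spec h
  have hlen : q1.length + q2.length = p.length := by
    have := congrArg Walk.length hspec
    rwa [Walk.length_append] at this
  have hg : p.getVert q1.length = p.getVert i := by
    have := congrArg (fun w => Walk.getVert w q1.length) hspec
    rw [← this, Walk.getVert_append]
    simp
  exact dirac_getVert_injOn' hp q1.length (by omega) i hi hg

lemma dirac_getVert_one_dropUntil {u v : V} {p : G.Walk u v} (hp : p.IsPath) {i : ℕ}
    (hi : i < p.length) (h : p.getVert i ∈ p.support) :
    (p.dropUntil (p.getVert i) h).getVert 1 = p.getVert (i + 1) := by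
  have hl := dirac_length_takeUntil_getVert hp (le_of_lt hi) h
  have hspec := p.take_spec h
  have := congrArg (fun w => Walk.getVert w (i+1)) hspec
  rw [← this, Walk.getVert_append]
  simp [hl]

lemma dirac_crossing {S : V → Prop} : ∀ {x y : V} (_ : G.Walk x y), ¬ S x → S y →
    ∃ c d : V, G.Adj c d ∧ ¬ S c ∧ S d := by
  intro x y W
  induction W with
  | nil => intro h1 h2; exact absurd h2 h1
  | cons h q ih =>
    rename_i u z w
    intro h1 h2
    by_cases hz : S z
    · exact ⟨u, z, h, h1, hz⟩
    · exact ih hz h2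

lemma dirac_exists_max_path [Fintype V] [Nonempty V] (G : SimpleGraph V) :
    ∃ (a b : V) (p : G.Walk a b), p.IsPath ∧
      ∀ (x y : V) (q : G.Walk x y), q.IsPath → q.length ≤ p.length := by
  classical
  set S : Set ℕ := {l | ∃ (x y : V) (q : G.Walk x y), q.IsPath ∧ q.length = l} with hS
  have hne : S.Nonempty := ⟨0, Classical.arbitrary V, _, Walk.nil, Walk.IsPath.nil, rfl⟩
  have hbdd : BddAbove S := by
    refine ⟨Fintype.card V, ?_⟩
    rintro l ⟨x, y, q, hq, rfl⟩
    exact le_of_lt hq.length_lt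
  obtain ⟨a, b, p, hp, hlen⟩ := Nat.sSup_mem hne hbdd
  exact ⟨a, b, p, hp, fun x y q hq => hlen ▸ le_csSup hbdd ⟨x, y, q, hq, rfl⟩⟩

end DiracAux

theorem dirac_main {V : Type*} [Fintype V] [DecidableEq V] {G : SimpleGraph V}
    [DecidableRel G.Adj] (hn : 3 ≤ Fintype.card V) (hconn : G.Connected)
    (hdeg : ∀ v : V, (Fintype.card V : ℝ) / 2 ≤ (G.degree v : ℝ)) :
    ∃ (v : V) (C : G.Walk v v), C.IsCycle ∧ ∀ u : V, u ∈ C.support := by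
  classical
  have hVne : Nonempty V := Fintype.card_pos_iff.mp (by omega)
  obtain ⟨a, b, p, hp, hmax⟩ := dirac_exists_max_path G
  set n := Fintype.card V with hndef
  set k := p.length with hkdef
  have hkn : k < n := hp.length_lt
  -- all neighbors of a and b lie on p
  have hA : ∀ c, G.Adj a c → c ∈ p.support := by
    intro c hc
    by_contra hcs
    have hq : (Walk.cons hc.symm p).IsPath := (Walk.cons_isPath_iff _ _).mpr ⟨hp, hcs⟩
    have := hmax _ _ _ hq
    rw [Walk.length_cons] at this
    omega
  have hB : ∀ c, G.Adj b c → c ∈ p.support := by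
    intro c hc
    by_contra hcs
    have hq : (Walk.cons hc.symm p.reverse).IsPath :=
      (Walk.cons_isPath_iff _ _).mpr ⟨hp.reverse, by simpa [Walk.support_reverse] using hcs⟩
    have := hmax _ _ _ hq
    rw [Walk.length_cons, Walk.length_reverse] at this
    omega
  -- degree bounds
  have hsuppcard : p.support.toFinset.card = k + 1 := by
    rw [List.toFinset_card_of_nodup hp.support_nodup, Walk.length_support]
  have hdega_le : G.degree a ≤ k := by
    have hsub : G.neighborFinset a ⊆ p.support.toFinset.erase a := by
      intro c hc
      rw [SimpleGraph.mem_neighborFinset] at hc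
      exact Finset.mem_erase.mpr ⟨(G.ne_of_adj hc).symm, List.mem_toFinset.mpr (hA c hc)⟩
    calc G.degree a = (G.neighborFinset a).card := rfl
      _ ≤ (p.support.toFinset.erase a).card := Finset.card_le_card hsub
      _ ≤ p.support.toFinset.card - 1 := le_of_eq (Finset.card_erase_of_mem
            (List.mem_toFinset.mpr p.start_mem_support))
      _ = k := by omega
  have hdega2 : 2 ≤ G.degree a := by
    have h1 := hdeg a
    have h3 : (3 : ℝ) ≤ (n : ℝ) := by exact_mod_cast hn
    have : (1 : ℝ) < (G.degree a : ℝ) := by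
      linarith
    exact_mod_cast this
  have hk2 : 2 ≤ k := le_trans hdega2 hdega_le
  -- pigeonhole
  have hsum : n ≤ G.degree a + G.degree b := by
    have h1 := hdeg a
    have h2 := hdeg b
    have : (n : ℝ) ≤ (G.degree a : ℝ) + (G.degree b : ℝ) := by linarith
    exact_mod_cast this
  set S := (Finset.range k).filter (fun i => G.Adj a (p.getVert (i+1))) with hSdef
  set T := (Finset.range k).filter (fun i => G.Adj b (p.getVert i)) with hTdef
  have idx_lt : ∀ c ∈ p.support, p.support.idxOf c < k + 1 := by
    intro c hc
    have := List.idxOf_lt_length_iff.mpr hc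
    rwa [Walk.length_support] at this
  have idx_get : ∀ c (hc : c ∈ p.support), p.getVert (p.support.idxOf c) = c := by
    intro c hc
    rw [← dirac_support_getElem' p _ (List.idxOf_lt_length_iff.mpr hc)]
    exact List.getElem_idxOf _
  have hcardS : G.degree a ≤ S.card := by
    rw [show G.degree a = (G.neighborFinset a).card from rfl]
    apply Finset.card_le_card_of_injOn (fun c => p.support.idxOf c - 1)
    · intro c hc
      rw [Finset.mem_coe, SimpleGraph.mem_neighborFinset] at hc
      have hcs := hA c hc
      have hlt := idx_lt c hcs
      have hgv := idx_get c hcs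
      have hne0 : p.support.idxOf c ≠ 0 := by
        intro h0
        rw [h0] at hgv
        simp at hgv
        exact G.ne_of_adj hc hgv
      rw [hSdef, Finset.mem_coe, Finset.mem_filter, Finset.mem_range]
      beta_reduce
      constructor
      · omega
      · rwa [show p.support.idxOf c - 1 + 1 = p.support.idxOf c by omega, hgv]
    · intro c hc c' hc' hcc
      simp only [Finset.mem_coe, SimpleGraph.mem_neighborFinset] at hc hc'
      have h1 := idx_get c (hA c hc)
      have h2 := idx_get c' (hA c' hc')
      have hne0 : p.support.idxOf c ≠ 0 := by
        intro h0; rw [h0] at h1; simp at h1; exact G.ne_of_adj hc h1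
      have hne0' : p.support.idxOf c' ≠ 0 := by
        intro h0; rw [h0] at h2; simp at h2; exact G.ne_of_adj hc' h2
      have hcc' : p.support.idxOf c - 1 = p.support.idxOf c' - 1 := hcc
      have : p.support.idxOf c = p.support.idxOf c' := by omega
      rw [← h1, ← h2, this]
  have hcardT : G.degree b ≤ T.card := by
    rw [show G.degree b = (G.neighborFinset b).card from rfl]
    apply Finset.card_le_card_of_injOn (fun c => p.support.idxOf c)
    · intro c hc
      rw [Finset.mem_coe, SimpleGraph.mem_neighborFinset] at hc
      have hcs := hB c hc
      have hlt := idx_lt c hcs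
      have hgv := idx_get c hcs
      have hnek : p.support.idxOf c ≠ k := by
        intro h0
        rw [h0, hkdef, Walk.getVert_length] at hgv
        exact G.ne_of_adj hc hgv
      rw [hTdef, Finset.mem_coe, Finset.mem_filter, Finset.mem_range]
      beta_reduce
      exact ⟨by omega, by rwa [hgv]⟩
    · intro c hc c' hc' hcc
      rw [Finset.mem_coe, SimpleGraph.mem_neighborFinset] at hc hc'
      have h1 := idx_get c (hB c hc)
      have h2 := idx_get c' (hB c' hc')
      have hcc' : p.support.idxOf c = p.support.idxOf c' := hcc
      rw [← h1, ← h2, hcc']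
  have hinter : (S ∩ T).Nonempty := by
    rw [← Finset.card_pos]
    have hu : (S ∪ T).card ≤ k := by
      calc (S ∪ T).card ≤ (Finset.range k).card := Finset.card_le_card (by
            rw [hSdef, hTdef]
            exact Finset.union_subset (Finset.filter_subset _ _) (Finset.filter_subset _ _))
        _ = k := Finset.card_range k
    have := Finset.card_union_add_card_inter S T
    omega
  obtain ⟨i, hi⟩ := hinter
  rw [Finset.mem_inter, hSdef, hTdef, Finset.mem_filter, Finset.mem_filter,
    Finset.mem_range] at hi
  obtain ⟨⟨hik, hSadj⟩, _, hTadj⟩ := hi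
  -- construct the cycle
  have hw : p.getVert i ∈ p.support := dirac_getVert_mem_support' p i (by omega)
  set w := p.getVert i with hwdef
  set q1 := p.takeUntil w hw with hq1
  set q2 := p.dropUntil w hw with hq2
  have hspec : q1.append q2 = p := p.take_spec hw
  have hq2nil : ¬ q2.Nil := by
    intro hnil
    have h0 : q2.length = 0 := Walk.nil_iff_length_eq.mp hnil
    have hwb : w = b := Walk.eq_of_length_eq_zero h0
    have : i = k := dirac_getVert_injOn' hp i (by omega) k le_rfl
      (by rw [← hwdef, hwb, hkdef, Walk.getVert_length])
    omega
  set q3 := q2.tail with hq3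
  have huq : q2.getVert 1 = p.getVert (i + 1) := dirac_getVert_one_dropUntil hp hik hw
  have hau : G.Adj a (q2.getVert 1) := huq ▸ hSadj
  have hq2cons : Walk.cons (q2.adj_snd hq2nil) q3 = q2 := q2.cons_tail_eq hq2nil
  have hsupp : p.support = q1.support ++ q3.support := by
    have h1 := congrArg Walk.support hspec
    rw [Walk.support_append] at h1
    rw [← h1, Walk.support_tail_of_not_nil q2 hq2nil]
  have hnd : (q1.support ++ q3.support).Nodup := hsupp ▸ hp.support_nodup
  have hdisj : ∀ x, x ∈ q1.support → x ∈ q3.support → False := by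
    have := (List.nodup_append.mp hnd).2.2
    exact fun x h1 h3 => this x h1 x h3 rfl
  set R : G.Walk w b := q1.reverse.append (Walk.cons hau q3) with hR
  have hRsupp : R.support = q1.support.reverse ++ q3.support := by
    rw [hR, Walk.support_append, Walk.support_reverse, Walk.support_cons, List.tail_cons]
  have hRpath : R.IsPath := by
    apply Walk.IsPath.mk'
    rw [hRsupp]
    obtain ⟨ha1, ha2, ha3⟩ := List.nodup_append.mp hnd
    exact List.nodup_append.mpr
      ⟨List.nodup_reverse.mpr ha1, ha2, fun x hx => ha3 x (List.mem_reverse.mp hx)⟩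
  have haneb : a ≠ b := by
    intro hab
    have : (0 : ℕ) = k := dirac_getVert_injOn' hp 0 (by omega) k le_rfl
      (by rw [Walk.getVert_zero, hkdef, Walk.getVert_length, hab])
    omega
  have hedge : s(b, w) ∉ R.edges := by
    intro hmem
    rw [hR, Walk.edges_append, Walk.edges_cons, List.mem_append] at hmem
    rcases hmem with h1 | h1
    · have hb1 : b ∈ q1.reverse.support := q1.reverse.fst_mem_support_of_mem_edges h1
      rw [Walk.support_reverse, List.mem_reverse] at hb1
      exact hdisj b hb1 q3.end_mem_support
    · rcases List.mem_cons.mp h1 with h2 | h2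
      · rw [Sym2.eq_iff] at h2
        rcases h2 with ⟨hba, hwu⟩ | ⟨hbu, hwa⟩
        · exact haneb hba.symm
        · have hi0 : i = 0 := dirac_getVert_injOn' hp i (by omega) 0 (by omega)
            (by rw [← hwdef, hwa, Walk.getVert_zero])
          have hik1 : i + 1 = k := dirac_getVert_injOn' hp (i+1) (by omega) k le_rfl
            (by rw [← huq, ← hbu, hkdef, Walk.getVert_length])
          omega
      · have hw3 : w ∈ q3.support := by
          have := q3.snd_mem_support_of_mem_edges h2
          exact this
        exact hdisj w q1.end_mem_support hw3
  set C : G.Walk b b := Walk.cons hTadj R with hC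
  have hCcyc : C.IsCycle := (Walk.cons_isCycle_iff R hTadj).mpr ⟨hRpath, hedge⟩
  have hCsupp : ∀ x, x ∈ p.support → x ∈ C.support := by
    intro x hx
    rw [hC, Walk.support_cons, List.mem_cons, hRsupp]
    rw [hsupp, List.mem_append] at hx
    rcases hx with h1 | h1
    · exact Or.inr (List.mem_append.mpr (Or.inl (List.mem_reverse.mpr h1)))
    · exact Or.inr (List.mem_append.mpr (Or.inr h1))
  have hCsub : ∀ x, x ∈ C.support → x ∈ p.support := by
    intro x hx
    rw [hC, Walk.support_cons, List.mem_cons, hRsupp, List.mem_append] at hx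
    rcases hx with rfl | h1 | h1
    · exact p.end_mem_support
    · rw [hsupp, List.mem_append]; exact Or.inl (List.mem_reverse.mp h1)
    · rw [hsupp, List.mem_append]; exact Or.inr h1
  -- completeness of the cycle
  have hall : ∀ x : V, x ∈ p.support := by
    by_contra hcon
    push_neg at hcon
    obtain ⟨y, hy⟩ := hcon
    obtain ⟨x, c, hadj, hxn, hcn⟩ :=
      dirac_crossing (S := fun z => z ∈ p.support) ((hconn y a).some) hy p.start_mem_support
    have hcC : c ∈ C.support := hCsupp c hcn
    set C' := C.rotate c hcC with hC'
    have hC'cyc : C'.IsCycle := hCcyc.rotate hcC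
    have hC'nil : ¬ C'.Nil := hC'cyc.not_nil
    set P : G.Walk (C'.getVert 1) c := C'.tail with hP
    have hPsupp : P.support = C'.support.tail := Walk.support_tail_of_not_nil C' hC'nil
    have hPpath : P.IsPath := Walk.IsPath.mk' (by rw [hPsupp]; exact hC'cyc.2)
    have hmemC' : ∀ z, z ∈ C.support → z ∈ C'.support := by
      intro z hz
      rw [hC', Walk.rotate, Walk.mem_support_append_iff]
      rw [← Walk.take_spec C hcC, Walk.mem_support_append_iff] at hz
      tauto
    have hmemP : ∀ z, z ∈ C.support → z ∈ P.support := by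
      intro z hz
      have h1 := hmemC' z hz
      rw [C'.support_eq_cons, List.mem_cons] at h1
      rcases h1 with rfl | h1
      · exact hP ▸ P.end_mem_support
      · rw [hPsupp]; exact h1
    set Q := Walk.cons hadj P.reverse with hQ
    have hQpath : Q.IsPath := by
      rw [hQ]
      refine (Walk.cons_isPath_iff _ _).mpr ⟨hPpath.reverse, ?_⟩
      rw [Walk.support_reverse, List.mem_reverse]
      intro hxP
      have : x ∈ p.support := hCsub x (by
        -- x ∈ P.support → x ∈ C'.support → x ∈ C.support
        have h1 : x ∈ C'.support := by
          rw [C'.support_eq_cons]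
          exact List.mem_cons.mpr (Or.inr (hPsupp ▸ hxP))
        rw [hC', Walk.rotate, Walk.mem_support_append_iff] at h1
        rw [← Walk.take_spec C hcC, Walk.mem_support_append_iff]
        tauto)
      exact hxn this
    -- cardinality contradiction
    have hQcard : Q.support.toFinset.card = Q.length + 1 := by
      rw [List.toFinset_card_of_nodup hQpath.support_nodup, Walk.length_support]
    have hsubQ : insert x p.support.toFinset ⊆ Q.support.toFinset := by
      intro z hz
      rw [Finset.mem_insert] at hz
      rw [List.mem_toFinset]
      rcases hz with rfl | hz
      · rw [hQ, Walk.support_cons]; exact List.mem_cons_self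
      · rw [List.mem_toFinset] at hz
        rw [hQ, Walk.support_cons]
        refine List.mem_cons.mpr (Or.inr ?_)
        rw [Walk.support_reverse, List.mem_reverse]
        exact hmemP z (hCsupp z hz)
    have hcard2 : k + 2 ≤ Q.support.toFinset.card := by
      have h1 : (insert x p.support.toFinset).card = k + 2 := by
        rw [Finset.card_insert_of_notMem (fun hmem => hxn (List.mem_toFinset.mp hmem)), hsuppcard]
      rw [← h1]
      exact Finset.card_le_card hsubQ
    have := hmax _ _ _ hQpath
    omega
  exact ⟨b, C, hCcyc, fun x => hCsupp x (hall x)⟩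


/-- A 2-connected graph on `n ≥ 3` vertices with minimum degree at least `n/2` has a
Hamiltonian cycle. -/
theorem stmt_11 {V : Type*} [Fintype V] [DecidableEq V] {G : SimpleGraph V}
    [DecidableRel G.Adj] (hn : 3 ≤ Fintype.card V) (hG : TwoConnected G)
    (hdeg : ∀ v : V, (Fintype.card V : ℝ) / 2 ≤ (G.degree v : ℝ)) :
    ∃ (v : V) (C : G.Walk v v), C.IsCycle ∧ ∀ u : V, u ∈ C.support := by
  exact dirac_main hn hG.2.1 hdeg
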